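/- For every odd integer t ≥ 3, every positive integer n, and every integer m, the set of tn consecutive integers {m, m+1, ..., m+tn−1} can be partitioned into n pairwise disjoint t-element subsets such that the set of the n subset sums consists of n consecutive integers a, a+1, ..., a+n−1 for some integer a. -/

import Mathlib

namespace CTSaux

def gn (n k i j : ℕ) : ℕ :=
  if j = 0 then i
  else if j = 1 then n + i
  else if j = 2 then 3*n - 1 - i
  else if j % 2 = 1 then 3*n + ((j-3)/2 * n + i)
  else 2*(k*n) + 3*n - 1 - ((j-4)/2 * n + i)

def dec (n k d : ℕ) : ℕ × ℕ :=
  if d < n then (d, 0)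
  else if d < 2*n then (d - n, 1)
  else if d < 3*n then (3*n - 1 - d, 2)
  else if d < 3*n + k*n then ((d - 3*n) % n, 2*((d - 3*n)/n) + 3)
  else ((2*(k*n) + 3*n - 1 - d) % n, 2*((2*(k*n) + 3*n - 1 - d)/n) + 4)

lemma blockBound {n k r i : ℕ} (hr : r < k) (hi : i < n) : r*n + i < k*n :=
  calc r*n + i < r*n + n := by omega
    _ = (r+1)*n := by ring
    _ ≤ k*n := Nat.mul_le_mul_right n hr

lemma modmul {n r i : ℕ} (hi : i < n) : (r*n + i) % n = i := by
  rw [mul_comm, Nat.mul_add_mod, Nat.mod_eq_of_lt hi]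

lemma divmul {n r i : ℕ} (hn : 0 < n) (hi : i < n) : (r*n + i) / n = r := by
  rw [mul_comm, Nat.mul_add_div hn, Nat.div_eq_of_lt hi, add_zero]

lemma gn_eval0 (n k i : ℕ) : gn n k i 0 = i := by simp [gn]
lemma gn_eval1 (n k i : ℕ) : gn n k i 1 = n + i := by simp [gn]
lemma gn_eval2 (n k i : ℕ) : gn n k i 2 = 3*n - 1 - i := by simp [gn]

lemma gn_eval_odd (n k i j : ℕ) (h0 : j ≠ 0) (h1 : j ≠ 1) (h2 : j ≠ 2)
    (hodd : j % 2 = 1) : gn n k i j = 3*n + ((j-3)/2 * n + i) := by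
  unfold gn
  rw [if_neg h0, if_neg h1, if_neg h2, if_pos hodd]

lemma gn_eval_even (n k i j : ℕ) (h0 : j ≠ 0) (h1 : j ≠ 1) (h2 : j ≠ 2)
    (hodd : ¬ j % 2 = 1) : gn n k i j = 2*(k*n) + 3*n - 1 - ((j-4)/2 * n + i) := by
  unfold gn
  rw [if_neg h0, if_neg h1, if_neg h2, if_neg hodd]

lemma dec_gn (n k : ℕ) (hn : 0 < n) {i j : ℕ} (hi : i < n) (hj : j < 2*k+3) :
    dec n k (gn n k i j) = (i, j) := by
  by_cases h0 : j = 0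
  · subst h0
    rw [gn_eval0]
    unfold dec
    rw [if_pos hi]
  by_cases h1 : j = 1
  · subst h1
    rw [gn_eval1]
    unfold dec
    rw [if_neg (by omega), if_pos (by omega)]
    have h3 : n + i - n = i := by omega
    rw [h3]
  by_cases h2 : j = 2
  · subst h2
    rw [gn_eval2]
    unfold dec
    rw [if_neg (by omega), if_neg (by omega), if_pos (by omega)]
    have h3 : 3*n - 1 - (3*n - 1 - i) = i := by omega
    rw [h3]
  by_cases hodd : j % 2 = 1
  · have hr : (j-3)/2 < k := by omega
    have hb : (j-3)/2 * n + i < k*n := blockBound hr hi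
    rw [gn_eval_odd n k i j h0 h1 h2 hodd]
    unfold dec
    set e := (j-3)/2 * n + i with he
    rw [if_neg (by omega), if_neg (by omega), if_neg (by omega), if_pos (by omega)]
    have h3 : 3*n + e - 3*n = e := by omega
    rw [h3]
    have hm : e % n = i := by rw [he]; exact modmul hi
    have hd : e / n = (j-3)/2 := by rw [he]; exact divmul hn hi
    rw [hm, hd]
    simp only [Prod.mk.injEq]
    exact ⟨trivial, by omega⟩
  · have hj4 : 4 ≤ j := by omega
    have hr : (j-4)/2 < k := by omega
    have hb : (j-4)/2 * n + i < k*n := blockBound hr hi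
    rw [gn_eval_even n k i j h0 h1 h2 hodd]
    unfold dec
    set e := (j-4)/2 * n + i with he
    rw [if_neg (by omega), if_neg (by omega), if_neg (by omega), if_neg (by omega)]
    have h3 : 2*(k*n) + 3*n - 1 - (2*(k*n) + 3*n - 1 - e) = e := by omega
    rw [h3]
    have hm : e % n = i := by rw [he]; exact modmul hi
    have hd : e / n = (j-4)/2 := by rw [he]; exact divmul hn hi
    rw [hm, hd]
    simp only [Prod.mk.injEq]
    exact ⟨trivial, by omega⟩

lemma gn_inj (n k : ℕ) (hn : 0 < n) {i j i' j' : ℕ} (hi : i < n) (hj : j < 2*k+3)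
    (hi' : i' < n) (hj' : j' < 2*k+3) (h : gn n k i j = gn n k i' j') :
    i = i' ∧ j = j' := by
  have a1 := dec_gn n k hn hi hj
  have a2 := dec_gn n k hn hi' hj'
  rw [h, a2] at a1
  simp only [Prod.mk.injEq] at a1
  exact ⟨a1.1.symm, a1.2.symm⟩

lemma gn_lt (n k : ℕ) (hn : 0 < n) {i j : ℕ} (hi : i < n) (hj : j < 2*k+3) :
    gn n k i j < 2*(k*n) + 3*n := by
  unfold gn
  split_ifs with h0 h1 h2 hodd
  · omega
  · omega
  · omega
  · have hr : (j-3)/2 < k := by omega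
    have hb : (j-3)/2 * n + i < k*n := blockBound hr hi
    omega
  · omega

lemma gn_surj (n k : ℕ) (hn : 0 < n) {d : ℕ} (hd : d < 2*(k*n) + 3*n) :
    ∃ i j, i < n ∧ j < 2*k+3 ∧ gn n k i j = d := by
  by_cases c1 : d < n
  · exact ⟨d, 0, c1, by omega, by rw [gn_eval0]⟩
  by_cases c2 : d < 2*n
  · refine ⟨d - n, 1, by omega, by omega, ?_⟩
    rw [gn_eval1]
    omega
  by_cases c3 : d < 3*n
  · refine ⟨3*n - 1 - d, 2, by omega, by omega, ?_⟩
    rw [gn_eval2]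
    omega
  by_cases c4 : d < 3*n + k*n
  · have he : d - 3*n < k*n := by omega
    have hq : (d - 3*n)/n < k := (Nat.div_lt_iff_lt_mul hn).2 (by omega)
    refine ⟨(d - 3*n) % n, 2*((d - 3*n)/n) + 3, Nat.mod_lt _ hn, by omega, ?_⟩
    rw [gn_eval_odd n k _ _ (by omega) (by omega) (by omega) (by omega)]
    have h5 : (2*((d - 3*n)/n) + 3 - 3)/2 = (d - 3*n)/n := by omega
    rw [h5, mul_comm ((d - 3*n)/n) n, Nat.div_add_mod]
    omega
  · set e := 2*(k*n) + 3*n - 1 - d with hedef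
    have hKn : 3*n + k*n ≤ d := by omega
    have he : e < k*n := by omega
    have hq : e/n < k := (Nat.div_lt_iff_lt_mul hn).2 (by omega)
    refine ⟨e % n, 2*(e/n) + 4, Nat.mod_lt _ hn, by omega, ?_⟩
    rw [gn_eval_even n k _ _ (by omega) (by omega) (by omega) (by omega)]
    have h5 : (2*(e/n) + 4 - 4)/2 = e/n := by omega
    rw [h5, mul_comm (e/n) n, Nat.div_add_mod]
    omega


lemma gn_odd' (n k i r : ℕ) : gn n k i (2*r+3) = 3*n + (r*n + i) := by
  rw [gn_eval_odd n k i _ (by omega) (by omega) (by omega) (by omega)]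
  have h : (2*r+3-3)/2 = r := by omega
  rw [h]

lemma gn_even' (n k i r : ℕ) : gn n k i (2*r+4) = 2*(k*n) + 3*n - 1 - (r*n + i) := by
  rw [gn_eval_even n k i _ (by omega) (by omega) (by omega) (by omega)]
  have h : (2*r+4-4)/2 = r := by omega
  rw [h]

lemma range_split (k : ℕ) : Finset.range (2*k+3) =
    (({0,1,2} : Finset ℕ) ∪ (Finset.range k).image (fun r => 2*r+3)) ∪
      (Finset.range k).image (fun r => 2*r+4) := by
  ext x
  simp only [Finset.mem_range, Finset.mem_union, Finset.mem_insert,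
    Finset.mem_singleton, Finset.mem_image]
  constructor
  · intro hx
    rcases Nat.lt_or_ge x 3 with h | h
    · left; left; omega
    · rcases Nat.even_or_odd x with ⟨c, hc⟩ | ⟨c, hc⟩
      · right; exact ⟨(x-4)/2, by omega, by omega⟩
      · left; right; exact ⟨(x-3)/2, by omega, by omega⟩
  · rintro ((h | h | h) | ⟨r, hr, rfl⟩ | ⟨r, hr, rfl⟩) <;> omega

lemma gn_sum (n k i : ℕ) (hn : 0 < n) (hi : i < n) :
    ∑ j ∈ Finset.range (2*k+3), gn n k i j = 4*n - 1 + i + k*(2*(k*n) + 6*n - 1) := by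
  have hdisj1 : Disjoint (({0,1,2} : Finset ℕ)) ((Finset.range k).image (fun r => 2*r+3)) := by
    rw [Finset.disjoint_left]
    intro x hx hx'
    simp only [Finset.mem_insert, Finset.mem_singleton] at hx
    simp only [Finset.mem_image, Finset.mem_range] at hx'
    obtain ⟨r, hr, hrx⟩ := hx'
    omega
  have hdisj2 : Disjoint (({0,1,2} : Finset ℕ) ∪ (Finset.range k).image (fun r => 2*r+3))
      ((Finset.range k).image (fun r => 2*r+4)) := by
    rw [Finset.disjoint_left]
    intro x hx hx'
    simp only [Finset.mem_union, Finset.mem_insert, Finset.mem_singleton,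
      Finset.mem_image, Finset.mem_range] at hx
    simp only [Finset.mem_image, Finset.mem_range] at hx'
    obtain ⟨r, hr, hrx⟩ := hx'
    rcases hx with (h | h | h) | ⟨r', hr', hrx'⟩ <;> omega
  rw [range_split, Finset.sum_union hdisj2, Finset.sum_union hdisj1]
  rw [Finset.sum_image (fun a _ b _ h => by omega : ∀ a ∈ Finset.range k, ∀ b ∈ Finset.range k, 2*a+3 = 2*b+3 → a = b)]
  rw [Finset.sum_image (fun a _ b _ h => by omega : ∀ a ∈ Finset.range k, ∀ b ∈ Finset.range k, 2*a+4 = 2*b+4 → a = b)]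
  have hA : ∑ j ∈ ({0,1,2} : Finset ℕ), gn n k i j = i + (n + i) + (3*n - 1 - i) := by
    rw [show ({0,1,2} : Finset ℕ) = insert 0 (insert 1 {2}) from rfl,
      Finset.sum_insert (by simp), Finset.sum_insert (by simp), Finset.sum_singleton,
      gn_eval0, gn_eval1, gn_eval2]
    omega
  have hB : ∀ r ∈ Finset.range k,
      gn n k i (2*r+3) + gn n k i (2*r+4) = 2*(k*n) + 6*n - 1 := by
    intro r hr
    rw [Finset.mem_range] at hr
    have hb := blockBound hr hi
    rw [gn_odd', gn_even']
    omega
  have hBC : (∑ r ∈ Finset.range k, gn n k i (2*r+3)) + ∑ r ∈ Finset.range k, gn n k i (2*r+4)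
      = k * (2*(k*n) + 6*n - 1) := by
    rw [← Finset.sum_add_distrib, Finset.sum_congr rfl hB, Finset.sum_const,
      Finset.card_range, smul_eq_mul]
  rw [hA, add_assoc, hBC]
  omega


def Tset (m : ℤ) (n k i : ℕ) : Finset ℤ :=
  (Finset.range (2*k+3)).image (fun j => m + (gn n k i j : ℤ))

lemma mem_Tset {m : ℤ} {n k i : ℕ} {x : ℤ} :
    x ∈ Tset m n k i ↔ ∃ j, j < 2*k+3 ∧ m + (gn n k i j : ℤ) = x := by
  simp [Tset, Finset.mem_image, Finset.mem_range]

lemma card_Tset {m : ℤ} {n k i : ℕ} (hn : 0 < n) (hi : i < n) :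
    (Tset m n k i).card = 2*k+3 := by
  rw [Tset, Finset.card_image_of_injOn, Finset.card_range]
  intro j hj j' hj' h
  simp only [Finset.coe_range, Set.mem_Iio] at hj hj'
  have h2 : m + (gn n k i j : ℤ) = m + (gn n k i j' : ℤ) := h
  have hg : gn n k i j = gn n k i j' := by omega
  exact (gn_inj n k hn hi hj hi hj' hg).2

lemma sum_Tset {m : ℤ} {n k i : ℕ} (hn : 0 < n) (hi : i < n) :
    (Tset m n k i).sum id =
      m * (2*k+3) + ((4*n - 1 + k*(2*(k*n) + 6*n - 1) : ℕ) : ℤ) + i := by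
  rw [Tset, Finset.sum_image]
  · simp only [id_eq]
    rw [Finset.sum_add_distrib, Finset.sum_const, Finset.card_range, nsmul_eq_mul,
      ← Nat.cast_sum, gn_sum n k i hn hi]
    have h : (4*n - 1 + i + k*(2*(k*n) + 6*n - 1)) =
        (4*n - 1 + k*(2*(k*n) + 6*n - 1)) + i := by omega
    rw [h]
    push_cast
    ring
  · intro j hj j' hj' h
    rw [Finset.mem_coe, Finset.mem_range] at hj hj'
    have h2 : m + (gn n k i j : ℤ) = m + (gn n k i j' : ℤ) := h
    have hg : gn n k i j = gn n k i j' := by omega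
    exact (gn_inj n k hn hi hj hi hj' hg).2

end CTSaux

open CTSaux

/-- For every odd `t ≥ 3`, every `n ≥ 1` and every integer `m`, the set of `t*n`
consecutive integers `{m, ..., m+t*n-1}` can be partitioned into `n` sets of size `t`
whose set of sums is a set of `n` consecutive integers. -/
theorem consecutive_tuple_sums_of_odd (t n : ℕ) (ht : 3 ≤ t) (htodd : Odd t)
    (hn : 0 < n) (m : ℤ) :
    ∃ (P : Finset (Finset ℤ)) (a : ℤ),
      P.card = n ∧
      (∀ p ∈ P, p.card = t) ∧
      (∀ p ∈ P, ∀ q ∈ P, p ≠ q → Disjoint p q) ∧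
      P.biUnion id = Finset.Icc m (m + (t : ℤ) * (n : ℤ) - 1) ∧
      P.image (fun p => p.sum id) = Finset.Icc a (a + (n : ℤ) - 1) := by
  obtain ⟨c, hc⟩ := htodd
  obtain ⟨k, rfl⟩ : ∃ k, t = 2*k+3 := ⟨c-1, by omega⟩
  obtain ⟨a, ha⟩ : ∃ a : ℤ,
      a = m * (2*k+3) + ((4*n - 1 + k*(2*(k*n) + 6*n - 1) : ℕ) : ℤ) := ⟨_, rfl⟩
  have hcast : ((2*k+3 : ℕ) : ℤ) * (n : ℤ) = ((2*(k*n) + 3*n : ℕ) : ℤ) := by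
    push_cast; ring
  refine ⟨(Finset.range n).image (Tset m n k), a, ?_, ?_, ?_, ?_, ?_⟩
  · -- card
    rw [Finset.card_image_of_injOn, Finset.card_range]
    intro i hi i' hi' hTT
    simp only [Finset.coe_range, Set.mem_Iio] at hi hi'
    have h0 : m + (gn n k i 0 : ℤ) ∈ Tset m n k i := mem_Tset.2 ⟨0, by omega, rfl⟩
    rw [hTT] at h0
    obtain ⟨j', hj', hv⟩ := mem_Tset.1 h0
    have hg : gn n k i' j' = gn n k i 0 := by omega
    exact ((gn_inj n k hn hi' hj' hi (by omega) hg).1).symm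
  · -- cards of parts
    intro p hp
    obtain ⟨i, hi, rfl⟩ := Finset.mem_image.1 hp
    rw [Finset.mem_range] at hi
    exact card_Tset hn hi
  · -- pairwise disjoint
    intro p hp q hq hpq
    obtain ⟨i, hi, rfl⟩ := Finset.mem_image.1 hp
    obtain ⟨i', hi', rfl⟩ := Finset.mem_image.1 hq
    rw [Finset.mem_range] at hi hi'
    rw [Finset.disjoint_left]
    intro x hx hx'
    obtain ⟨j, hj, hv⟩ := mem_Tset.1 hx
    obtain ⟨j', hj', hv'⟩ := mem_Tset.1 hx'
    have hg : gn n k i j = gn n k i' j' := by omega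
    exact hpq (by rw [(gn_inj n k hn hi hj hi' hj' hg).1])
  · -- union
    ext x
    rw [Finset.mem_Icc, hcast]
    simp only [Finset.mem_biUnion, Finset.mem_image, Finset.mem_range, id_eq]
    constructor
    · rintro ⟨p, ⟨i, hi, rfl⟩, hx⟩
      obtain ⟨j, hj, hv⟩ := mem_Tset.1 hx
      have hlt := gn_lt n k hn hi hj
      omega
    · rintro ⟨h1, h2⟩
      have hd : (x - m).toNat < 2*(k*n) + 3*n := by omega
      obtain ⟨i, j, hi, hj, hgn⟩ := gn_surj n k hn hd
      refine ⟨Tset m n k i, ⟨i, hi, rfl⟩, mem_Tset.2 ⟨j, hj, ?_⟩⟩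
      rw [hgn]
      omega
  · -- sums
    rw [Finset.image_image]
    ext x
    simp only [Finset.mem_image, Finset.mem_range, Function.comp_apply, Finset.mem_Icc]
    constructor
    · rintro ⟨i, hi, rfl⟩
      rw [sum_Tset hn hi, ← ha]
      omega
    · rintro ⟨hx1, hx2⟩
      refine ⟨(x - a).toNat, by omega, ?_⟩
      rw [sum_Tset hn (by omega), ← ha]
      omega
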